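/- arXiv:2106.05324 — 2 statements merged into one kernel-verified Lean document; each statement's English description precedes it below -/
import Mathlib

section
/- For every n ≥ 4, the complete bipartite graph K_{2,n} is PRCF-bad: every proper edge coloring of K_{2,n} contains a rainbow 4-cycle. -/
open SimpleGraph

def IsProperEdgeColoring {V : Type u} {C : Type v} (G : SimpleGraph V) (φ : Sym2 V → C) : Prop :=
  ∀ ⦃e₁ e₂ : Sym2 V⦄, e₁ ∈ G.edgeSet → e₂ ∈ G.edgeSet → e₁ ≠ e₂ →
    (∃ v, v ∈ e₁ ∧ v ∈ e₂) → φ e₁ ≠ φ e₂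

section Aux

variable {n : ℕ}

private lemma kadj (i : Fin 2) (j : Fin n) :
    (completeBipartiteGraph (Fin 2) (Fin n)).Adj (Sum.inl i) (Sum.inr j) := by simp

private lemma kadj' (j : Fin n) (i : Fin 2) :
    (completeBipartiteGraph (Fin 2) (Fin n)).Adj (Sum.inr j) (Sum.inl i) := by simp

private lemma rainbow_cycle {C : Type v} (φ : Sym2 (Fin 2 ⊕ Fin n) → C)
    (hφ : IsProperEdgeColoring (completeBipartiteGraph (Fin 2) (Fin n)) φ)
    (i j : Fin n) (hij : i ≠ j)
    (h1 : φ s(Sum.inl 0, Sum.inr i) ≠ φ s(Sum.inl 1, Sum.inr j))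
    (h2 : φ s(Sum.inl 1, Sum.inr i) ≠ φ s(Sum.inl 0, Sum.inr j)) :
    ∃ (u : Fin 2 ⊕ Fin n) (c : (completeBipartiteGraph (Fin 2) (Fin n)).Walk u u),
      c.IsCycle ∧ c.length = 4 ∧ (c.edges.map φ).Nodup := by
  set a : Fin 2 ⊕ Fin n := Sum.inl 0 with ha
  set b : Fin 2 ⊕ Fin n := Sum.inl 1 with hb
  set x : Fin 2 ⊕ Fin n := Sum.inr i with hx
  set y : Fin 2 ⊕ Fin n := Sum.inr j with hy
  have hab : a ≠ b := by simp [ha, hb]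
  have hxy : x ≠ y := by simp [hx, hy, hij]
  refine ⟨a, Walk.cons (kadj 0 i) (Walk.cons (kadj' i 1) (Walk.cons (kadj 1 j)
    (Walk.cons (kadj' j 0) Walk.nil))), ?_, rfl, ?_⟩
  · rw [Walk.isCycle_def, Walk.isTrail_def]
    refine ⟨?_, by simp, ?_⟩
    · simp only [Walk.edges_cons, Walk.edges_nil, List.nodup_cons, List.mem_cons,
        List.not_mem_nil, or_false, List.nodup_nil, and_true, not_or, not_false_eq_true]
      simp [Sym2.eq_iff, hab, hab.symm, hxy, hxy.symm, hij, ha,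
        show x ≠ a by simp [hx, ha], show x ≠ b by simp [hx, hb],
        show y ≠ a by simp [hy, ha], show y ≠ b by simp [hy, hb]]
    · simp only [Walk.support_cons, Walk.support_nil, List.tail_cons]
      simp [hab, hab.symm, hxy, hxy.symm, hij, show x ≠ a by simp [hx, ha],
        show x ≠ b by simp [hx, hb], show y ≠ a by simp [hy, ha],
        show y ≠ b by simp [hy, hb]]
  · -- colors nodup
    have mem1 : s(a, x) ∈ (completeBipartiteGraph (Fin 2) (Fin n)).edgeSet := (kadj 0 i)
    have mem2 : s(x, b) ∈ (completeBipartiteGraph (Fin 2) (Fin n)).edgeSet := (kadj' i 1)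
    have mem3 : s(b, y) ∈ (completeBipartiteGraph (Fin 2) (Fin n)).edgeSet := (kadj 1 j)
    have mem4 : s(y, a) ∈ (completeBipartiteGraph (Fin 2) (Fin n)).edgeSet := (kadj' j 0)
    have d12 : φ s(a, x) ≠ φ s(x, b) := by
      refine hφ mem1 mem2 ?_ ⟨x, by simp⟩
      simp [Sym2.eq_iff, hab, show x ≠ a by simp [hx, ha], show x ≠ b by simp [hx, hb]]
    have d13 : φ s(a, x) ≠ φ s(b, y) := by
      simpa [ha, hb, hx, hy] using h1
    have d14 : φ s(a, x) ≠ φ s(y, a) := by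
      refine hφ mem1 mem4 ?_ ⟨a, by simp⟩
      simp [Sym2.eq_iff, hxy, hxy.symm, show x ≠ a by simp [hx, ha],
        show y ≠ a by simp [hy, ha]]
    have d23 : φ s(x, b) ≠ φ s(b, y) := by
      refine hφ mem2 mem3 ?_ ⟨b, by simp⟩
      simp [Sym2.eq_iff, hxy, show x ≠ b by simp [hx, hb], show y ≠ b by simp [hy, hb]]
    have d24 : φ s(x, b) ≠ φ s(y, a) := by
      have h2' : φ s(b, x) ≠ φ s(a, y) := by simpa [ha, hb, hx, hy] using h2
      simpa [Sym2.eq_swap] using h2'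
    have d34 : φ s(b, y) ≠ φ s(y, a) := by
      refine hφ mem3 mem4 ?_ ⟨y, by simp⟩
      simp [Sym2.eq_iff, hab, hab.symm, show y ≠ a by simp [hy, ha],
        show y ≠ b by simp [hy, hb]]
    simp only [Walk.edges_cons, Walk.edges_nil, List.map_cons, List.map_nil,
      List.nodup_cons, List.mem_cons, List.not_mem_nil, or_false, List.nodup_nil,
      and_true, not_or, not_false_eq_true]
    exact ⟨⟨d12, d13, d14⟩, ⟨d23, d24⟩, d34⟩

end Aux

/-- For every `n ≥ 4`, the complete bipartite graph `K_{2,n}` is PRCF-bad: every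
proper edge coloring contains a rainbow 4-cycle. -/
theorem completeBipartite_two_n_PRCF_bad (n : ℕ) (hn : 4 ≤ n) :
    ∀ {C : Type v} (φ : Sym2 (Fin 2 ⊕ Fin n) → C),
      IsProperEdgeColoring (completeBipartiteGraph (Fin 2) (Fin n)) φ →
      ∃ (u : Fin 2 ⊕ Fin n) (c : (completeBipartiteGraph (Fin 2) (Fin n)).Walk u u),
        c.IsCycle ∧ c.length = 4 ∧ (c.edges.map φ).Nodup := by
  intro C φ hφ
  set i0 : Fin n := ⟨0, by omega⟩
  set j1 : Fin n := ⟨1, by omega⟩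
  set j2 : Fin n := ⟨2, by omega⟩
  set j3 : Fin n := ⟨3, by omega⟩
  have hmem : ∀ (u : Fin 2) (v : Fin n),
      s(Sum.inl u, Sum.inr v) ∈ (completeBipartiteGraph (Fin 2) (Fin n)).edgeSet :=
    fun u v => kadj u v
  have finj : ∀ (u : Fin 2) (v w : Fin n),
      φ s(Sum.inl u, Sum.inr v) = φ s(Sum.inl u, Sum.inr w) → v = w := by
    intro u v w h
    by_contra hvw
    exact hφ (hmem u v) (hmem u w) (by simp [Sym2.eq_iff, hvw]) ⟨Sum.inl u, by simp⟩ h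
  -- find j with both color inequalities
  have key : ∃ j : Fin n, i0 ≠ j ∧
      φ s(Sum.inl 0, Sum.inr i0) ≠ φ s(Sum.inl 1, Sum.inr j) ∧
      φ s(Sum.inl 1, Sum.inr i0) ≠ φ s(Sum.inl 0, Sum.inr j) := by
    by_contra h
    push_neg at h
    have hne : ∀ j : Fin n, i0 ≠ j →
        φ s(Sum.inl 0, Sum.inr i0) = φ s(Sum.inl 1, Sum.inr j) ∨
        φ s(Sum.inl 1, Sum.inr i0) = φ s(Sum.inl 0, Sum.inr j) := by
      intro j hj
      by_contra hc
      push_neg at hc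
      exact hc.2 (h j hj hc.1)
    have e1 : i0 ≠ j1 := by simp [i0, j1, Fin.ext_iff]
    have e2 : i0 ≠ j2 := by simp [i0, j2, Fin.ext_iff]
    have e3 : i0 ≠ j3 := by simp [i0, j3, Fin.ext_iff]
    have n12 : j1 ≠ j2 := by simp [j1, j2, Fin.ext_iff]
    have n13 : j1 ≠ j3 := by simp [j1, j3, Fin.ext_iff]
    have n23 : j2 ≠ j3 := by simp [j2, j3, Fin.ext_iff]
    rcases hne j1 e1 with h1 | h1 <;> rcases hne j2 e2 with h2 | h2 <;>
      rcases hne j3 e3 with h3 | h3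
    · exact n12 (finj 1 j1 j2 (h1.symm.trans h2))
    · exact n12 (finj 1 j1 j2 (h1.symm.trans h2))
    · exact n13 (finj 1 j1 j3 (h1.symm.trans h3))
    · exact n23 (finj 0 j2 j3 (h2.symm.trans h3))
    · exact n23 (finj 1 j2 j3 (h2.symm.trans h3))
    · exact n13 (finj 0 j1 j3 (h1.symm.trans h3))
    · exact n12 (finj 0 j1 j2 (h1.symm.trans h2))
    · exact n12 (finj 0 j1 j2 (h1.symm.trans h2))
  obtain ⟨j, hij, c1, c2⟩ := key
  exact rainbow_cycle φ hφ i0 j hij c1 c2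
end

section
/- Let G be an r-regular simple graph with girth g satisfying r ≤ g − 2. Then G is PRCF-good: since by Vizing's theorem G has a proper edge coloring with at most r + 1 ≤ g − 1 colors, any such coloring uses fewer colors than the length of any cycle of G, so no cycle is rainbow. -/
open SimpleGraph

/-- A graph is PRCF-good if it admits a proper edge coloring in which no cycle is
rainbow (i.e. every cycle has two edges of the same color). -/
def PRCFGood {V : Type u} (G : SimpleGraph V) : Prop :=
  ∃ (C : Type u) (φ : Sym2 V → C), IsProperEdgeColoring G φ ∧
    ∀ (u : V) (c : G.Walk u u), c.IsCycle → ¬ (c.edges.map φ).Nodup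

namespace PRCF

variable {V : Type u} {C : Type*}

/-- Properness, in a convenient pointwise form. -/
def PropC (G : SimpleGraph V) (φ : Sym2 V → C) : Prop :=
  ∀ ⦃a w₁ w₂ : V⦄, G.Adj a w₁ → G.Adj a w₂ → w₁ ≠ w₂ → φ s(a, w₁) ≠ φ s(a, w₂)

/-- Color `γ` is free (unused) at vertex `a`. -/
def FreeAt (G : SimpleGraph V) (φ : Sym2 V → C) (a : V) (γ : C) : Prop :=
  ∀ ⦃w⦄, G.Adj a w → φ s(a, w) ≠ γ

/-- `G` minus the single edge `s(x,t)`. -/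
def Gd (G : SimpleGraph V) (x t : V) : SimpleGraph V := G.deleteEdges {s(x, t)}

lemma Gd_adj {G : SimpleGraph V} {x t a b : V} :
    (Gd G x t).Adj a b ↔ G.Adj a b ∧ s(a, b) ≠ s(x, t) := by
  simp [Gd]

lemma Gd_le {G : SimpleGraph V} {x t : V} : Gd G x t ≤ G := SimpleGraph.deleteEdges_le _

/-- The subgraph of edges colored `α` or `β`. -/
def sub (G : SimpleGraph V) (φ : Sym2 V → C) (α β : C) : SimpleGraph V where
  Adj a b := G.Adj a b ∧ (φ s(a, b) = α ∨ φ s(a, b) = β)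
  symm := by
    refine ⟨fun a b h => ?_⟩
    refine ⟨h.1.symm, ?_⟩
    rw [Sym2.eq_swap]
    exact h.2
  loopless := ⟨fun a h => G.irrefl h.1⟩

lemma sub_adj {G : SimpleGraph V} {φ : Sym2 V → C} {α β : C} {a b : V} :
    (sub G φ α β).Adj a b ↔ G.Adj a b ∧ (φ s(a, b) = α ∨ φ s(a, b) = β) := Iff.rfl

section Swap

variable [DecidableEq C] (G : SimpleGraph V) (φ : Sym2 V → C) (α β : C) (w₀ : V)

open Classical in
/-- Swap colors `α`, `β` on the connected component of `w₀` in the `α/β` subgraph. -/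
noncomputable def swapC : Sym2 V → C := fun e =>
  if (e ∈ (sub G φ α β).edgeSet ∧ ∃ u ∈ e, (sub G φ α β).Reachable w₀ u)
  then Equiv.swap α β (φ e) else φ e

variable {G φ α β w₀}

lemma swapC_cond {a b : V} (h : (sub G φ α β).Adj a b) :
    (s(a, b) ∈ (sub G φ α β).edgeSet ∧ ∃ u ∈ s(a, b), (sub G φ α β).Reachable w₀ u) ↔
      (sub G φ α β).Reachable w₀ a := by
  constructor
  · rintro ⟨-, u, hu, hru⟩
    rcases Sym2.mem_iff.mp hu with rfl | rfl
    · exact hru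
    · exact hru.trans h.symm.reachable
  · intro hra
    exact ⟨(sub G φ α β).mem_edgeSet.mpr h, a, Sym2.mem_mk_left a b, hra⟩

lemma swapC_eq_of_mem {a b : V} (h : (sub G φ α β).Adj a b)
    (hr : (sub G φ α β).Reachable w₀ a) :
    swapC G φ α β w₀ s(a, b) = Equiv.swap α β (φ s(a, b)) := by
  unfold swapC
  rw [if_pos ((swapC_cond h).mpr hr)]

lemma swapC_eq_of_not {a b : V} (h : ¬((sub G φ α β).Adj a b ∧ (sub G φ α β).Reachable w₀ a)) :
    swapC G φ α β w₀ s(a, b) = φ s(a, b) := by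
  unfold swapC
  rw [if_neg]
  rintro ⟨he, hu⟩
  have hadj : (sub G φ α β).Adj a b := (sub G φ α β).mem_edgeSet.mp he
  exact h ⟨hadj, (swapC_cond hadj).mp ⟨he, hu⟩⟩

lemma swapC_prop (hφ : PropC G φ) : PropC G (swapC G φ α β w₀) := by
  intro a w₁ w₂ h1 h2 hne heq
  by_cases c₁ : (sub G φ α β).Adj a w₁ ∧ (sub G φ α β).Reachable w₀ a <;>
    by_cases c₂ : (sub G φ α β).Adj a w₂ ∧ (sub G φ α β).Reachable w₀ a
  · rw [swapC_eq_of_mem c₁.1 c₁.2, swapC_eq_of_mem c₂.1 c₂.2] at heq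
    exact hφ h1 h2 hne ((Equiv.swap α β).injective heq)
  · rw [swapC_eq_of_mem c₁.1 c₁.2, swapC_eq_of_not c₂] at heq
    refine c₂ ⟨⟨h2, ?_⟩, c₁.2⟩
    rcases c₁.1.2 with hc | hc <;> rw [hc] at heq
    · right; rw [Equiv.swap_apply_left] at heq; exact heq.symm
    · left; rw [Equiv.swap_apply_right] at heq; exact heq.symm
  · rw [swapC_eq_of_not c₁, swapC_eq_of_mem c₂.1 c₂.2] at heq
    refine c₁ ⟨⟨h1, ?_⟩, c₂.2⟩
    rcases c₂.1.2 with hc | hc <;> rw [hc] at heq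
    · right; rw [Equiv.swap_apply_left] at heq; exact heq
    · left; rw [Equiv.swap_apply_right] at heq; exact heq
  · rw [swapC_eq_of_not c₁, swapC_eq_of_not c₂] at heq
    exact hφ h1 h2 hne heq

lemma swapC_free_of_ne {a : V} {γ : C} (hγα : γ ≠ α) (hγβ : γ ≠ β)
    (h : FreeAt G φ a γ) : FreeAt G (swapC G φ α β w₀) a γ := by
  intro w hw heq
  by_cases c : (sub G φ α β).Adj a w ∧ (sub G φ α β).Reachable w₀ a
  · rw [swapC_eq_of_mem c.1 c.2] at heq
    rcases c.1.2 with hc | hc <;> rw [hc] at heq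
    · rw [Equiv.swap_apply_left] at heq; exact hγβ heq.symm
    · rw [Equiv.swap_apply_right] at heq; exact hγα heq.symm
  · rw [swapC_eq_of_not c] at heq
    exact h hw heq

lemma swapC_eq_of_not_reachable {a : V} (h : ¬ (sub G φ α β).Reachable w₀ a) {b : V}
    (hb : G.Adj a b) : swapC G φ α β w₀ s(a, b) = φ s(a, b) :=
  swapC_eq_of_not fun hc => h hc.2

lemma swapC_free_self (hφ : PropC G φ) (hαβ : α ≠ β) (h : FreeAt G φ w₀ β) :
    FreeAt G (swapC G φ α β w₀) w₀ α := by
  intro w hw heq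
  by_cases c : (sub G φ α β).Adj w₀ w ∧ (sub G φ α β).Reachable w₀ w₀
  · rw [swapC_eq_of_mem c.1 c.2] at heq
    rcases c.1.2 with hc | hc <;> rw [hc] at heq
    · rw [Equiv.swap_apply_left] at heq; exact hαβ heq.symm
    · exact h hw hc
  · rw [swapC_eq_of_not c] at heq
    exact c ⟨⟨hw, Or.inl heq⟩, SimpleGraph.Reachable.refl w₀⟩

end Swap

section ThreeEndpoints

variable {H : SimpleGraph V}

open SimpleGraph.Walk

lemma two_nbrs {a b : V} (p : H.Walk a b) (hp : p.IsPath) :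
    ∀ x ∈ p.support, x ≠ a → x ≠ b →
      ∃ u v, u ≠ v ∧ H.Adj x u ∧ H.Adj x v ∧ u ∈ p.support ∧ v ∈ p.support := by
  induction p with
  | nil =>
    intro x hx hxa _
    rw [support_nil, List.mem_singleton] at hx
    exact absurd hx hxa
  | @cons a c b h q ih =>
    intro x hx hxa hxb
    rw [support_cons, List.mem_cons] at hx
    rcases hx with rfl | hx
    · exact absurd rfl hxa
    by_cases hxc : x = c
    · subst hxc
      cases q with
      | nil => exact absurd rfl hxb
      | @cons c d b h' q' =>
        have hd : d ∈ (Walk.cons h' q').support := by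
          rw [support_cons]
          exact List.mem_cons_of_mem _ q'.start_mem_support
        have hane : a ≠ d := by
          rintro rfl
          exact ((Walk.cons_isPath_iff h (Walk.cons h' q')).mp hp).2 hd
        exact ⟨a, d, hane, h.symm, h',
          by rw [support_cons]; exact List.mem_cons_self,
          by rw [support_cons]; exact List.mem_cons_of_mem _ hd⟩
    · obtain ⟨u, v, huv, hu, hv, hus, hvs⟩ := ih hp.of_cons x hx hxc hxb
      exact ⟨u, v, huv, hu, hv,
        by rw [support_cons]; exact List.mem_cons_of_mem _ hus,
        by rw [support_cons]; exact List.mem_cons_of_mem _ hvs⟩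

lemma start_case {a b : V} (p : H.Walk a b) (hab : a ≠ b)
    (ha1 : ∀ u₁ u₂, H.Adj a u₁ → H.Adj a u₂ → u₁ = u₂) :
    ∀ v, H.Adj a v → v ∈ p.support := by
  cases p with
  | nil => exact absurd rfl hab
  | @cons a c b h q =>
    intro v hv
    have : v = c := ha1 v c hv h
    subst this
    rw [support_cons]
    exact List.mem_cons_of_mem _ q.start_mem_support

lemma support_closed
    (hdeg2 : ∀ a u₁ u₂ u₃, H.Adj a u₁ → H.Adj a u₂ → H.Adj a u₃ → u₁ = u₂ ∨ u₁ = u₃ ∨ u₂ = u₃)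
    {a b : V} (hab : a ≠ b) (p : H.Walk a b) (hp : p.IsPath)
    (ha1 : ∀ u₁ u₂, H.Adj a u₁ → H.Adj a u₂ → u₁ = u₂)
    (hb1 : ∀ u₁ u₂, H.Adj b u₁ → H.Adj b u₂ → u₁ = u₂) :
    ∀ x ∈ p.support, ∀ v, H.Adj x v → v ∈ p.support := by
  intro x hx v hv
  by_cases hxa : x = a
  · subst hxa
    exact start_case p hab ha1 v hv
  by_cases hxb : x = b
  · subst hxb
    have := start_case p.reverse (Ne.symm hab) hb1 v hv
    rwa [support_reverse, List.mem_reverse] at this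
  obtain ⟨u, w, huw, hu, hw, hus, hws⟩ := two_nbrs p hp x hx hxa hxb
  rcases hdeg2 x v u w hv hu hw with rfl | rfl | rfl
  · exact hus
  · exact hws
  · exact absurd rfl huw

lemma walk_support {s t : V} (w : H.Walk s t) {a b : V} (p : H.Walk a b)
    (closed : ∀ x ∈ p.support, ∀ v, H.Adj x v → v ∈ p.support)
    (hs : s ∈ p.support) : t ∈ p.support := by
  induction w with
  | nil => exact hs
  | cons h q ih => exact ih (closed _ hs _ h)

/-- In a graph of max degree ≤ 2, three distinct pairwise-reachable vertices cannot all
have degree ≤ 1. -/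
lemma no_three
    (hdeg2 : ∀ a u₁ u₂ u₃, H.Adj a u₁ → H.Adj a u₂ → H.Adj a u₃ → u₁ = u₂ ∨ u₁ = u₃ ∨ u₂ = u₃)
    {a b x : V} (hab : a ≠ b) (hxa : x ≠ a) (hxb : x ≠ b)
    (ha1 : ∀ u₁ u₂, H.Adj a u₁ → H.Adj a u₂ → u₁ = u₂)
    (hb1 : ∀ u₁ u₂, H.Adj b u₁ → H.Adj b u₂ → u₁ = u₂)
    (hx1 : ∀ u₁ u₂, H.Adj x u₁ → H.Adj x u₂ → u₁ = u₂)
    (hrab : H.Reachable a b) (hrax : H.Reachable a x) : False := by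
  classical
  obtain ⟨w⟩ := hrab
  obtain ⟨wx⟩ := hrax
  have hp : (w.toPath : H.Walk a b).IsPath := w.toPath.prop
  have closed := support_closed hdeg2 hab _ hp ha1 hb1
  have hxs : x ∈ (w.toPath : H.Walk a b).support :=
    walk_support wx _ closed (w.toPath : H.Walk a b).start_mem_support
  obtain ⟨u, v, huv, hu, hv, -, -⟩ := two_nbrs _ hp x hxs hxa hxb
  exact huv (hx1 u v hu hv)

end ThreeEndpoints

section Fan

variable (G : SimpleGraph V) (φ : Sym2 V → C) (x y₀ : V)

/-- A Vizing fan at `x` with uncolored edge `s(x,y₀)`: `Fan l y` means `l ++ [y]` is a fan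
sequence `y₀, …, y` where each new edge's color is free at the previous vertex. -/
inductive Fan : List V → V → Prop
  | base : Fan [] y₀
  | snoc {l : List V} {z y : V} : Fan l z → (Gd G x y₀).Adj x y → y ∉ l → y ≠ z →
      FreeAt (Gd G x y₀) φ z (φ s(x, y)) → Fan (l ++ [z]) y

variable {G φ x y₀}

lemma fan_mem_adj (hxy : G.Adj x y₀) {l : List V} {y : V} (hf : Fan G φ x y₀ l y) :
    ∀ w ∈ l ++ [y], G.Adj x w := by
  induction hf with
  | base =>
    intro w hw
    rw [List.nil_append, List.mem_singleton] at hw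
    subst hw; exact hxy
  | @snoc l z y hf' hadj hmem hne hfree ih =>
    intro w hw
    rw [List.mem_append, List.mem_singleton] at hw
    rcases hw with hw | rfl
    · exact ih w (by rwa [List.mem_append, List.mem_singleton] at hw ⊢)
    · exact (Gd_adj.mp hadj).1

lemma fan_nodup {l : List V} {y : V} (hf : Fan G φ x y₀ l y) : (l ++ [y]).Nodup := by
  induction hf with
  | base => simp
  | @snoc l z y hf' hadj hmem hne hfree ih =>
    have : y ∉ l ++ [z] := by
      rw [List.mem_append, List.mem_singleton]
      rintro (h | h)
      · exact hmem h
      · exact hne h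
    rw [List.nodup_append]
    refine ⟨ih, List.nodup_singleton y, ?_⟩
    intro a ha b hay hab
    rw [List.mem_singleton] at hay
    subst hay
    exact this (hab ▸ ha)

lemma fan_pred {l : List V} {y : V} (hf : Fan G φ x y₀ l y) :
    ∀ w ∈ l ++ [y], w = y₀ ∨ ∃ (l' : List V) (z : V), Fan G φ x y₀ l' z ∧
      FreeAt (Gd G x y₀) φ z (φ s(x, w)) ∧ (l' ++ [z] ++ [w]) <+: (l ++ [y]) := by
  induction hf with
  | base =>
    intro w hw
    rw [List.nil_append, List.mem_singleton] at hw
    exact Or.inl hw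
  | @snoc l z y hf' hadj hmem hne hfree ih =>
    intro w hw
    rw [List.mem_append, List.mem_singleton] at hw
    rcases hw with hw | rfl
    · rcases ih w hw with h | ⟨l', z', hfan, hfr, hpre⟩
      · exact Or.inl h
      · exact Or.inr ⟨l', z', hfan, hfr, hpre.trans (List.prefix_append _ _)⟩
    · exact Or.inr ⟨l, z, hf', hfree, List.prefix_refl _⟩

/-- Transfer a fan to a recoloring that does not change edges at `x` and preserves the
relevant freeness conditions. -/
lemma fan_transfer {ψ : Sym2 V → C} {l : List V} {y : V} (hf : Fan G φ x y₀ l y)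
    (h1 : ∀ u, (Gd G x y₀).Adj x u → ψ s(x, u) = φ s(x, u))
    (h2 : ∀ v u, (∃ l₁ : List V, (l₁ ++ [v] ++ [u]) <+: (l ++ [y])) → (Gd G x y₀).Adj x u →
      FreeAt (Gd G x y₀) φ v (φ s(x, u)) → FreeAt (Gd G x y₀) ψ v (φ s(x, u))) :
    Fan G ψ x y₀ l y := by
  revert h2
  induction hf with
  | base => intro _; exact Fan.base
  | @snoc l z y hf' hadj hmem hne hfree ih =>
    intro h2
    refine Fan.snoc (ih ?_) hadj hmem hne ?_
    · intro v u ⟨l₁, hpre⟩ hadju hfr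
      exact h2 v u ⟨l₁, hpre.trans (List.prefix_append _ _)⟩ hadju hfr
    · rw [h1 y hadj]
      exact h2 z y ⟨l, List.prefix_refl _⟩ hadj hfree

/-- The rotation lemma: given a fan ending at `y`, we can recolor so that the uncolored
edge becomes `s(x,y)`, without introducing new colors at `x` nor touching edges away
from `x`. -/
lemma fan_rotate (hxy : G.Adj x y₀) (hφ : PropC (Gd G x y₀) φ)
    {l : List V} {y : V} (hf : Fan G φ x y₀ l y) :
    ∃ ψ : Sym2 V → C,
      PropC (Gd G x y) ψ ∧
      (∀ e : Sym2 V, x ∉ e → ψ e = φ e) ∧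
      (∀ w, G.Adj x w → w ≠ y → ∃ w', (Gd G x y₀).Adj x w' ∧ ψ s(x, w) = φ s(x, w')) ∧
      (∀ w, w ∉ l ++ [y] → ψ s(x, w) = φ s(x, w)) := by
  classical
  induction hf with
  | base =>
    refine ⟨φ, hφ, fun e _ => rfl, ?_, fun w _ => rfl⟩
    intro w hw hwy
    refine ⟨w, Gd_adj.mpr ⟨hw, ?_⟩, rfl⟩
    intro hcontr
    rcases Sym2.eq_iff.mp hcontr with ⟨-, h⟩ | ⟨h, -⟩
    · exact hwy h
    · exact hxy.ne h
  | @snoc l z y hf' hadjy hymem hyz hfree ih =>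
    obtain ⟨ψ', P1, P2, P3, P4⟩ := ih
    have hGxy : G.Adj x y := (Gd_adj.mp hadjy).1
    have hGxz : G.Adj x z :=
      fan_mem_adj hxy hf' z (List.mem_append_right _ (List.mem_singleton_self z))
    have hxz : x ≠ z := hGxz.ne
    have hynel : y ∉ l ++ [z] := by
      rw [List.mem_append, List.mem_singleton]
      rintro (h | h)
      exacts [hymem h, hyz h]
    have hψ'xy : ψ' s(x, y) = φ s(x, y) := P4 y hynel
    set c := φ s(x, y) with hc
    have hupz : Function.update ψ' s(x, z) c s(x, z) = c := Function.update_self _ _ _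
    have hupo : ∀ e, e ≠ s(x, z) → Function.update ψ' s(x, z) c e = ψ' e :=
      fun e he => Function.update_of_ne he _ _
    refine ⟨Function.update ψ' s(x, z) c, ?_, ?_, ?_, ?_⟩
    · -- properness
      intro a w₁ w₂ h1 h2 hne heq
      have key : ∀ u₁ u₂, (Gd G x y).Adj a u₁ → (Gd G x y).Adj a u₂ → u₁ ≠ u₂ →
          s(a, u₁) = s(x, z) → s(a, u₂) ≠ s(x, z) →
          Function.update ψ' s(x, z) c s(a, u₁) ≠ Function.update ψ' s(x, z) c s(a, u₂) := by
        intro u₁ u₂ k1 k2 kne keq kneq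
        rw [keq, hupz, hupo _ kneq]
        rcases Sym2.eq_iff.mp keq with ⟨hax, hu₁z⟩ | ⟨haz, hu₁x⟩
        · -- a = x, u₁ = z
          rw [hax] at k2 ⊢
          have hu₂y : u₂ ≠ y := by
            intro h
            rw [h] at k2
            exact (Gd_adj.mp k2).2 rfl
          have hadj₂ : (Gd G x z).Adj x u₂ := Gd_adj.mpr ⟨(Gd_adj.mp k2).1, by
            intro h
            rcases Sym2.eq_iff.mp h with ⟨-, h'⟩ | ⟨h', -⟩
            · exact kneq (by rw [hax, h'])
            · exact hxz h'⟩
          have hadjy' : (Gd G x z).Adj x y := Gd_adj.mpr ⟨hGxy, by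
            intro h
            rcases Sym2.eq_iff.mp h with ⟨-, h'⟩ | ⟨h', -⟩
            · exact hyz h'
            · exact hxz h'⟩
          intro hcc
          exact P1 hadjy' hadj₂ (fun h => hu₂y h.symm) (hψ'xy.trans hcc)
        · -- a = z, u₁ = x
          rw [haz] at k2 ⊢
          have hu₂x : u₂ ≠ x := fun h => kne (hu₁x.trans h.symm)
          have hrw : ψ' s(z, u₂) = φ s(z, u₂) := P2 _ (by
            rw [Sym2.mem_iff]
            rintro (h | h)
            exacts [hxz h, hu₂x h.symm])
          rw [hrw]
          have hadj' : (Gd G x y₀).Adj z u₂ := Gd_adj.mpr ⟨(Gd_adj.mp k2).1, by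
            intro h
            rcases Sym2.eq_iff.mp h with ⟨h₁, -⟩ | ⟨-, h₂⟩
            · exact hxz h₁.symm
            · exact hu₂x h₂⟩
          exact fun hcc => hfree hadj' hcc.symm
      by_cases q₁ : s(a, w₁) = s(x, z) <;> by_cases q₂ : s(a, w₂) = s(x, z)
      · exfalso
        apply hne
        rcases Sym2.eq_iff.mp q₁ with ⟨ha1, hw1⟩ | ⟨ha1, hw1⟩ <;>
          rcases Sym2.eq_iff.mp q₂ with ⟨ha2, hw2⟩ | ⟨ha2, hw2⟩
        · exact hw1.trans hw2.symm
        · exact absurd (ha1.symm.trans ha2) hxz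
        · exact absurd (ha2.symm.trans ha1) hxz
        · exact hw1.trans hw2.symm
      · exact (key w₁ w₂ h1 h2 hne q₁ q₂) heq
      · exact (key w₂ w₁ h2 h1 hne.symm q₂ q₁) heq.symm
      · rw [hupo _ q₁, hupo _ q₂] at heq
        have k1 : (Gd G x z).Adj a w₁ := Gd_adj.mpr ⟨(Gd_adj.mp h1).1, q₁⟩
        have k2 : (Gd G x z).Adj a w₂ := Gd_adj.mpr ⟨(Gd_adj.mp h2).1, q₂⟩
        exact P1 k1 k2 hne heq
    · -- edges away from x unchanged
      intro e he
      have hee : e ≠ s(x, z) := fun h => he (h ▸ Sym2.mem_mk_left x z)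
      rw [hupo _ hee]
      exact P2 e he
    · -- no new colors at x
      intro w hw hwy
      by_cases hwz : w = z
      · subst hwz
        exact ⟨y, hadjy, by rw [hupz]⟩
      · have hee : s(x, w) ≠ s(x, z) := by
          intro h
          rcases Sym2.eq_iff.mp h with ⟨-, h'⟩ | ⟨h', -⟩
          exacts [hwz h', hxz h']
        rw [hupo _ hee]
        exact P3 w hw hwz
    · -- x-edges outside the fan unchanged
      intro w hw
      have hwl : w ∉ l ++ [z] := fun h => hw (List.mem_append_left _ h)
      have hwz : w ≠ z :=
        fun h => hwl (by rw [h]; exact List.mem_append_right _ (List.mem_singleton_self z))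
      have hee : s(x, w) ≠ s(x, z) := by
        intro h
        rcases Sym2.eq_iff.mp h with ⟨-, h'⟩ | ⟨h', -⟩
        exacts [hwz h', hxz h']
      rw [hupo _ hee]
      exact P4 w hwl

end Fan

section Extend

variable [Fintype V]

lemma exists_not_mem_finset {n : ℕ} (t : Finset (Fin (n + 1))) (ht : t.card ≤ n) :
    ∃ γ, γ ∉ t := by
  have h : tᶜ.Nonempty := by
    rw [← Finset.card_pos, Finset.card_compl, Fintype.card_fin]
    omega
  obtain ⟨γ, hγ⟩ := h
  exact ⟨γ, by simpa using hγ⟩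

lemma exists_free {Δ : ℕ} (G₂ : SimpleGraph V) (φ : Sym2 V → Fin (Δ + 1)) (v : V)
    (s : Finset V) (hs : s.card ≤ Δ) (hnb : ∀ w, G₂.Adj v w → w ∈ s) :
    ∃ γ, FreeAt G₂ φ v γ := by
  classical
  obtain ⟨γ, hγ⟩ := exists_not_mem_finset (s.image fun w => φ s(v, w))
    (Finset.card_image_le.trans hs)
  exact ⟨γ, fun w hw heq => hγ (heq ▸ Finset.mem_image_of_mem _ (hnb w hw))⟩

/-- A prefix of `q ++ [b]` is either everything or a prefix of `q`. -/
lemma prefix_concat_cases {α : Type*} {p q : List α} {b : α} (h : p <+: q ++ [b]) :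
    p = q ++ [b] ∨ p <+: q := by
  obtain ⟨r, hr⟩ := h
  induction r using List.reverseRecOn with
  | nil => left; rw [← hr, List.append_nil]
  | append_singleton r' c _ =>
    right
    rw [← List.append_assoc] at hr
    obtain ⟨h1, -⟩ := List.append_inj' hr rfl
    exact ⟨r', h1⟩

/-- In a nodup list, the element preceding a given element is unique. -/
lemma pred_eq {α : Type*} {L p q : List α} {v z w : α}
    (hL : L.Nodup) (h1 : p ++ [v] ++ [w] <+: L) (h2 : q ++ [z] ++ [w] <+: L) : v = z := by
  have key : ∀ {p' q' : List α} {v' z' : α}, (q' ++ [z'] ++ [w]).Nodup →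
      p' ++ [v'] ++ [w] <+: q' ++ [z'] ++ [w] → v' = z' := by
    intro p' q' v' z' hnd ⟨r, hr⟩
    induction r using List.reverseRecOn with
    | nil =>
      rw [List.append_nil] at hr
      obtain ⟨h1', -⟩ := List.append_inj' hr rfl
      obtain ⟨-, h2'⟩ := List.append_inj' h1' rfl
      simpa using h2'
    | append_singleton r' c _ =>
      exfalso
      rw [← List.append_assoc] at hr
      obtain ⟨h1', -⟩ := List.append_inj' hr rfl
      have hwmem : w ∈ q' ++ [z'] := by
        rw [← h1']
        exact List.mem_append_left _ (List.mem_append_right _ (List.mem_singleton_self w))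
      rw [List.nodup_append] at hnd
      exact hnd.2.2 _ hwmem _ (List.mem_singleton_self w) rfl
  rcases List.prefix_or_prefix_of_prefix h1 h2 with h | h
  · exact key ((hL.sublist h2.sublist)) h
  · exact (key ((hL.sublist h1.sublist)) h).symm

/-- Color the last edge: the Vizing extension step, final update. -/
lemma final_update {G : SimpleGraph V} {x t : V} (hadj : G.Adj x t)
    {n : ℕ} {ψ : Sym2 V → Fin (n + 1)} (hψ : PropC (Gd G x t) ψ) {γ : Fin (n + 1)}
    (hx : ∀ w, (Gd G x t).Adj x w → ψ s(x, w) ≠ γ)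
    (ht : ∀ u, (Gd G x t).Adj t u → ψ s(t, u) ≠ γ) :
    ∃ χ : Sym2 V → Fin (n + 1), PropC G χ := by
  classical
  have hxt : x ≠ t := hadj.ne
  have hupz : Function.update ψ s(x, t) γ s(x, t) = γ := Function.update_self _ _ _
  have hupo : ∀ e, e ≠ s(x, t) → Function.update ψ s(x, t) γ e = ψ e :=
    fun e he => Function.update_of_ne he _ _
  refine ⟨Function.update ψ s(x, t) γ, ?_⟩
  intro a w₁ w₂ h1 h2 hne heq
  have key : ∀ u₁ u₂, G.Adj a u₁ → G.Adj a u₂ → u₁ ≠ u₂ →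
      s(a, u₁) = s(x, t) → s(a, u₂) ≠ s(x, t) →
      Function.update ψ s(x, t) γ s(a, u₁) ≠ Function.update ψ s(x, t) γ s(a, u₂) := by
    intro u₁ u₂ k1 k2 kne keq kneq
    rw [keq, hupz, hupo _ kneq]
    rcases Sym2.eq_iff.mp keq with ⟨hax, hu₁t⟩ | ⟨hat, hu₁x⟩
    · -- a = x, u₁ = t
      rw [hax] at k2 ⊢
      have : (Gd G x t).Adj x u₂ := Gd_adj.mpr ⟨k2, fun hh => kneq (by rw [hax]; exact hh)⟩
      exact fun h => hx u₂ this h.symm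
    · -- a = t, u₁ = x
      rw [hat] at k2 ⊢
      have hu₂x : u₂ ≠ x := fun h => kne (hu₁x.trans h.symm)
      have : (Gd G x t).Adj t u₂ := Gd_adj.mpr ⟨k2, by
        intro h
        rcases Sym2.eq_iff.mp h with ⟨h₁, -⟩ | ⟨-, h₂⟩
        · exact hxt h₁.symm
        · exact hu₂x h₂⟩
      exact fun h => ht u₂ this h.symm
  by_cases q₁ : s(a, w₁) = s(x, t) <;> by_cases q₂ : s(a, w₂) = s(x, t)
  · exfalso
    apply hne
    rcases Sym2.eq_iff.mp q₁ with ⟨ha1, hw1⟩ | ⟨ha1, hw1⟩ <;>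
      rcases Sym2.eq_iff.mp q₂ with ⟨ha2, hw2⟩ | ⟨ha2, hw2⟩
    · exact hw1.trans hw2.symm
    · exact absurd (ha1.symm.trans ha2) hxt
    · exact absurd (ha2.symm.trans ha1) hxt
    · exact hw1.trans hw2.symm
  · exact (key w₁ w₂ h1 h2 hne q₁ q₂) heq
  · exact (key w₂ w₁ h2 h1 hne.symm q₂ q₁) heq.symm
  · rw [hupo _ q₁, hupo _ q₂] at heq
    have k1 : (Gd G x t).Adj a w₁ := Gd_adj.mpr ⟨h1, q₁⟩
    have k2 : (Gd G x t).Adj a w₂ := Gd_adj.mpr ⟨h2, q₂⟩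
    exact hψ k1 k2 hne heq

/-- The Vizing extension lemma. -/
lemma extend {Δ : ℕ} (G : SimpleGraph V)
    (hdeg : ∀ v, ∃ s : Finset V, s.card ≤ Δ ∧ ∀ w, G.Adj v w → w ∈ s)
    {x y₀ : V} (hxy : G.Adj x y₀) (φ : Sym2 V → Fin (Δ + 1))
    (hφ : PropC (Gd G x y₀) φ) : ∃ ψ : Sym2 V → Fin (Δ + 1), PropC G ψ := by
  classical
  -- a free color at x
  obtain ⟨sx, hsx, hsxn⟩ := hdeg x
  obtain ⟨α, hα⟩ := exists_free (Gd G x y₀) φ x sx hsx (fun w hw => hsxn w (Gd_le hw))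
  -- a maximal fan
  set S : Set ℕ := {n | ∃ (l : List V) (t : V), Fan G φ x y₀ l t ∧ n = (l ++ [t]).length}
    with hS
  have hSne : S.Nonempty := ⟨1, [], y₀, Fan.base, rfl⟩
  have hSbdd : BddAbove S := by
    refine ⟨Fintype.card V, ?_⟩
    rintro n ⟨l, t, hf, rfl⟩
    exact (fan_nodup hf).length_le_card
  obtain ⟨l, t, hf, hlen⟩ := Nat.sSup_mem hSne hSbdd
  have hmax : ∀ (l' : List V) (t' : V), Fan G φ x y₀ l' t' →
      (l' ++ [t']).length ≤ (l ++ [t]).length := by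
    intro l' t' hf'
    rw [← hlen]
    exact le_csSup hSbdd ⟨l', t', hf', rfl⟩
  -- a free color at the tip
  obtain ⟨st, hst, hstn⟩ := hdeg t
  obtain ⟨β, hβ⟩ := exists_free (Gd G x y₀) φ t st hst (fun w hw => hstn w (Gd_le hw))
  have hGxt : G.Adj x t :=
    fan_mem_adj hxy hf t (List.mem_append_right _ (List.mem_singleton_self t))
  have hxt : x ≠ t := hGxt.ne
  by_cases hβx : FreeAt (Gd G x y₀) φ x β
  · -- Case 0 : β is free at both x and the tip
    obtain ⟨ψ₂, Q1, Q2, Q3, Q4⟩ := fan_rotate hxy hφ hf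
    apply final_update hGxt Q1 (γ := β)
    · intro w hw
      obtain ⟨hGw, hnew⟩ := Gd_adj.mp hw
      have hwt : w ≠ t := fun h => hnew (by rw [h])
      obtain ⟨w', hw', heqw⟩ := Q3 w hGw hwt
      rw [heqw]
      exact hβx hw'
    · intro u hu
      obtain ⟨hGu, hneu⟩ := Gd_adj.mp hu
      have hux : u ≠ x := fun h => hneu (by rw [h]; exact Sym2.eq_swap)
      have hrw : ψ₂ s(t, u) = φ s(t, u) := Q2 _ (by
        rw [Sym2.mem_iff]
        rintro (h | h)
        exacts [hxt h, hux h.symm])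
      rw [hrw]
      refine hβ (Gd_adj.mpr ⟨hGu, ?_⟩)
      intro hcontr
      rcases Sym2.eq_iff.mp hcontr with ⟨h₁, -⟩ | ⟨-, h₂⟩
      · exact hxt h₁.symm
      · exact hux h₂
  · -- Main case : β is used at x
    have hused : ∃ w, (Gd G x y₀).Adj x w ∧ φ s(x, w) = β := by
      by_contra hc
      push_neg at hc
      exact hβx fun w hw => hc w hw
    obtain ⟨w, hadjw, hφw⟩ := hused
    have hαβ : α ≠ β := fun h => hβx (h ▸ hα)
    have hwmem : w ∈ l ++ [t] := by
      by_contra hwm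
      have hwt : w ≠ t := fun h => hwm (by
        rw [h]; exact List.mem_append_right _ (List.mem_singleton_self t))
      have hwl : w ∉ l := fun h => hwm (List.mem_append_left _ h)
      have hfrt : FreeAt (Gd G x y₀) φ t (φ s(x, w)) := by rw [hφw]; exact hβ
      have hf2 : Fan G φ x y₀ (l ++ [t]) w := Fan.snoc hf hadjw hwl hwt hfrt
      have := hmax _ _ hf2
      simp at this
    rcases fan_pred hf w hwmem with rfl | ⟨l₂, z, hfz, hfrz, hpre⟩
    · exact absurd rfl (Gd_adj.mp hadjw).2
    have hβfz : FreeAt (Gd G x y₀) φ z β := by rw [← hφw]; exact hfrz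
    have hnd : (l ++ [t]).Nodup := fan_nodup hf
    have hprenodup : (l₂ ++ [z] ++ [w]).Nodup := hnd.sublist hpre.sublist
    have hwnotin : w ∉ l₂ ++ [z] := by
      rw [List.nodup_append] at hprenodup
      exact fun h => hprenodup.2.2 _ h _ (List.mem_singleton_self w) rfl
    have hzl : z ∈ l := by
      rcases prefix_concat_cases hpre with heq | hpre'
      · obtain ⟨h1', -⟩ := List.append_inj' heq rfl
        rw [← h1']
        exact List.mem_append_right _ (List.mem_singleton_self z)
      · exact hpre'.subset
          (List.mem_append_left _ (List.mem_append_right _ (List.mem_singleton_self z)))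
    have htl : t ∉ l := by
      rw [List.nodup_append] at hnd
      exact fun h => hnd.2.2 _ h _ (List.mem_singleton_self t) rfl
    have hzt : z ≠ t := fun h => htl (h ▸ hzl)
    have hGxz : G.Adj x z := fan_mem_adj hxy hf z (List.mem_append_left _ hzl)
    have hxz : x ≠ z := hGxz.ne
    -- the α/β subgraph
    set H := sub (Gd G x y₀) φ α β with hH
    have hcol : ∀ a u u', (Gd G x y₀).Adj a u → (Gd G x y₀).Adj a u' →
        φ s(a, u) = φ s(a, u') → u = u' := by
      intro a u u' hu hu' hcc
      by_contra hne
      exact hφ hu hu' hne hcc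
    have hdeg2 : ∀ a u₁ u₂ u₃, H.Adj a u₁ → H.Adj a u₂ → H.Adj a u₃ →
        u₁ = u₂ ∨ u₁ = u₃ ∨ u₂ = u₃ := by
      intro a u₁ u₂ u₃ h1 h2 h3
      rcases h1.2 with e1 | e1 <;> rcases h2.2 with e2 | e2 <;> rcases h3.2 with e3 | e3
      · exact Or.inl (hcol a u₁ u₂ h1.1 h2.1 (by rw [e1, e2]))
      · exact Or.inl (hcol a u₁ u₂ h1.1 h2.1 (by rw [e1, e2]))
      · exact Or.inr (Or.inl (hcol a u₁ u₃ h1.1 h3.1 (by rw [e1, e3])))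
      · exact Or.inr (Or.inr (hcol a u₂ u₃ h2.1 h3.1 (by rw [e2, e3])))
      · exact Or.inr (Or.inr (hcol a u₂ u₃ h2.1 h3.1 (by rw [e2, e3])))
      · exact Or.inr (Or.inl (hcol a u₁ u₃ h1.1 h3.1 (by rw [e1, e3])))
      · exact Or.inl (hcol a u₁ u₂ h1.1 h2.1 (by rw [e1, e2]))
      · exact Or.inl (hcol a u₁ u₂ h1.1 h2.1 (by rw [e1, e2]))
    have hdegα : ∀ v, FreeAt (Gd G x y₀) φ v α →
        ∀ u₁ u₂, H.Adj v u₁ → H.Adj v u₂ → u₁ = u₂ := by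
      intro v hfv u₁ u₂ h1 h2
      have c1 : φ s(v, u₁) = β := h1.2.resolve_left fun h => hfv h1.1 h
      have c2 : φ s(v, u₂) = β := h2.2.resolve_left fun h => hfv h2.1 h
      exact hcol v u₁ u₂ h1.1 h2.1 (by rw [c1, c2])
    have hdegβ : ∀ v, FreeAt (Gd G x y₀) φ v β →
        ∀ u₁ u₂, H.Adj v u₁ → H.Adj v u₂ → u₁ = u₂ := by
      intro v hfv u₁ u₂ h1 h2
      have c1 : φ s(v, u₁) = α := h1.2.resolve_right fun h => hfv h1.1 h
      have c2 : φ s(v, u₂) = α := h2.2.resolve_right fun h => hfv h2.1 h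
      exact hcol v u₁ u₂ h1.1 h2.1 (by rw [c1, c2])
    by_cases hrzx : H.Reachable z x
    · -- Case B : swap around the tip t, rotate the full fan, color s(x,t) with α
      have hrtx : ¬ H.Reachable t x := by
        intro h
        exact no_three hdeg2 (Ne.symm hxz) hzt.symm hxt.symm (hdegβ z hβfz) (hdegα x hα)
          (hdegβ t hβ) hrzx (hrzx.trans h.symm)
      have hrtz : ¬ H.Reachable t z := by
        intro h
        exact no_three hdeg2 (Ne.symm hxz) hzt.symm hxt.symm (hdegβ z hβfz) (hdegα x hα)
          (hdegβ t hβ) hrzx h.symm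
      set ψ₁ := swapC (Gd G x y₀) φ α β t with hψ₁
      have hψ₁x : ∀ u, (Gd G x y₀).Adj x u → ψ₁ s(x, u) = φ s(x, u) :=
        fun u hu => swapC_eq_of_not_reachable hrtx hu
      have hfanψ₁ : Fan G ψ₁ x y₀ l t := by
        refine fan_transfer hf hψ₁x ?_
        intro v u ⟨l₁, hpre₁⟩ hadju hfr
        by_cases huw : u = w
        · have hvz : v = z := pred_eq hnd (huw ▸ hpre₁) hpre
          rw [huw, hφw] at hfr ⊢
          rw [hvz] at hfr ⊢
          intro b hb heq
          rw [hψ₁, swapC_eq_of_not_reachable hrtz hb] at heq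
          exact hfr hb heq
        · have hucβ : φ s(x, u) ≠ β := by
            rw [← hφw]
            exact fun hcc => huw (hcol x u w hadju hadjw hcc)
          have hucα : φ s(x, u) ≠ α := fun hcc => hα hadju hcc
          exact swapC_free_of_ne hucα hucβ hfr
      obtain ⟨ψ₂, Q1, Q2, Q3, Q4⟩ := fan_rotate hxy (swapC_prop hφ) hfanψ₁
      have hψ₁fx : FreeAt (Gd G x y₀) ψ₁ x α := by
        intro u hu heq
        rw [hψ₁x u hu] at heq
        exact hα hu heq
      have hψ₁ft : FreeAt (Gd G x y₀) ψ₁ t α := swapC_free_self hφ hαβ hβ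
      apply final_update hGxt Q1 (γ := α)
      · intro w' hw'
        obtain ⟨hGw, hnew⟩ := Gd_adj.mp hw'
        have hwt : w' ≠ t := fun h => hnew (by rw [h])
        obtain ⟨w'', hw'', heqw⟩ := Q3 w' hGw hwt
        rw [heqw]
        exact hψ₁fx hw''
      · intro u hu
        obtain ⟨hGu, hneu⟩ := Gd_adj.mp hu
        have hux : u ≠ x := fun h => hneu (by rw [h]; exact Sym2.eq_swap)
        have hrw : ψ₂ s(t, u) = ψ₁ s(t, u) := Q2 _ (by
          rw [Sym2.mem_iff]
          rintro (h | h)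
          exacts [hxt h, hux h.symm])
        rw [hrw]
        refine hψ₁ft (Gd_adj.mpr ⟨hGu, ?_⟩)
        intro hcontr
        rcases Sym2.eq_iff.mp hcontr with ⟨h₁, -⟩ | ⟨-, h₂⟩
        · exact hxt h₁.symm
        · exact hux h₂
    · -- Case A : swap around z, rotate the fan up to z, color s(x,z) with α
      set ψ₁ := swapC (Gd G x y₀) φ α β z with hψ₁
      have hψ₁x : ∀ u, (Gd G x y₀).Adj x u → ψ₁ s(x, u) = φ s(x, u) :=
        fun u hu => swapC_eq_of_not_reachable hrzx hu
      have hfanψ₁ : Fan G ψ₁ x y₀ l₂ z := by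
        refine fan_transfer hfz hψ₁x ?_
        intro v u ⟨l₁, hpre₁⟩ hadju hfr
        have humem : u ∈ l₂ ++ [z] :=
          hpre₁.subset (List.mem_append_right _ (List.mem_singleton_self u))
        have huw : u ≠ w := fun h => hwnotin (h ▸ humem)
        have hucβ : φ s(x, u) ≠ β := by
          rw [← hφw]
          exact fun hcc => huw (hcol x u w hadju hadjw hcc)
        have hucα : φ s(x, u) ≠ α := fun hcc => hα hadju hcc
        exact swapC_free_of_ne hucα hucβ hfr
      obtain ⟨ψ₂, Q1, Q2, Q3, Q4⟩ := fan_rotate hxy (swapC_prop hφ) hfanψ₁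
      have hψ₁fx : FreeAt (Gd G x y₀) ψ₁ x α := by
        intro u hu heq
        rw [hψ₁x u hu] at heq
        exact hα hu heq
      have hψ₁fz : FreeAt (Gd G x y₀) ψ₁ z α := swapC_free_self hφ hαβ hβfz
      apply final_update hGxz Q1 (γ := α)
      · intro w' hw'
        obtain ⟨hGw, hnew⟩ := Gd_adj.mp hw'
        have hwz : w' ≠ z := fun h => hnew (by rw [h])
        obtain ⟨w'', hw'', heqw⟩ := Q3 w' hGw hwz
        rw [heqw]
        exact hψ₁fx hw''
      · intro u hu
        obtain ⟨hGu, hneu⟩ := Gd_adj.mp hu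
        have hux : u ≠ x := fun h => hneu (by rw [h]; exact Sym2.eq_swap)
        have hrw : ψ₂ s(z, u) = ψ₁ s(z, u) := Q2 _ (by
          rw [Sym2.mem_iff]
          rintro (h | h)
          exacts [hxz h, hux h.symm])
        rw [hrw]
        refine hψ₁fz (Gd_adj.mpr ⟨hGu, ?_⟩)
        intro hcontr
        rcases Sym2.eq_iff.mp hcontr with ⟨h₁, -⟩ | ⟨-, h₂⟩
        · exact hxz h₁.symm
        · exact hux h₂

/-- Vizing's theorem. -/
lemma vizing {Δ : ℕ} (G : SimpleGraph V)
    (hdeg : ∀ v, ∃ s : Finset V, s.card ≤ Δ ∧ ∀ w, G.Adj v w → w ∈ s) :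
    ∃ φ : Sym2 V → Fin (Δ + 1), PropC G φ := by
  classical
  suffices H : ∀ (n : ℕ) (G : SimpleGraph V), G.edgeSet.ncard = n →
      (∀ v, ∃ s : Finset V, s.card ≤ Δ ∧ ∀ w, G.Adj v w → w ∈ s) →
      ∃ φ : Sym2 V → Fin (Δ + 1), PropC G φ by
    exact H _ G rfl hdeg
  intro n
  induction n using Nat.strong_induction_on with
  | _ n ih =>
    intro G hn hdeg
    rcases Set.eq_empty_or_nonempty G.edgeSet with he | ⟨e, he⟩
    · refine ⟨fun _ => 0, ?_⟩
      intro a w₁ w₂ h1 _ _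
      exact absurd (he ▸ (G.mem_edgeSet.mpr h1)) (Set.notMem_empty _)
    · revert he
      induction e using Sym2.ind with
      | _ x y₀ =>
        intro he
        have hxy : G.Adj x y₀ := G.mem_edgeSet.mp he
        have hsub : (Gd G x y₀).edgeSet = G.edgeSet \ {s(x, y₀)} :=
          SimpleGraph.edgeSet_deleteEdges _
        have hlt : (Gd G x y₀).edgeSet.ncard < n := by
          rw [hsub, ← hn]
          exact Set.ncard_diff_singleton_lt_of_mem he (Set.toFinite _)
        have hdeg' : ∀ v, ∃ s : Finset V, s.card ≤ Δ ∧ ∀ w, (Gd G x y₀).Adj v w → w ∈ s :=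
          fun v => (hdeg v).imp fun s hs => ⟨hs.1, fun w hw => hs.2 w (Gd_le hw)⟩
        obtain ⟨φ, hφ⟩ := ih _ hlt (Gd G x y₀) rfl hdeg'
        exact extend G hdeg hxy φ hφ

end Extend

end PRCF

/-- An `r`-regular graph whose girth `g` satisfies `r ≤ g - 2` is PRCF-good:
by Vizing's theorem it has a proper edge coloring with at most `r + 1 ≤ g - 1`
colors, so no cycle can be rainbow. -/
theorem PRCFGood_of_regular_small_degree {V : Type u} [Fintype V]
    (G : SimpleGraph V) [DecidableRel G.Adj] {r : ℕ}
    (hreg : G.IsRegularOfDegree r) (hgirth : (r : ℕ∞) + 2 ≤ G.egirth) :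
    PRCFGood G := by
  classical
  have hdeg : ∀ v, ∃ s : Finset V, s.card ≤ r ∧ ∀ w, G.Adj v w → w ∈ s := by
    intro v
    exact ⟨G.neighborFinset v, by rw [G.card_neighborFinset_eq_degree]; exact (hreg v).le,
      fun w hw => by rwa [SimpleGraph.mem_neighborFinset]⟩
  obtain ⟨φ, hφ⟩ := PRCF.vizing (Δ := r) G hdeg
  refine ⟨ULift.{u} (Fin (r + 1)), fun e => ULift.up (φ e), ?_, ?_⟩
  · intro e₁ e₂ h₁ h₂ hne ⟨v, hv₁, hv₂⟩
    obtain ⟨w₁, rfl⟩ := Sym2.mem_iff_exists.mp hv₁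
    obtain ⟨w₂, rfl⟩ := Sym2.mem_iff_exists.mp hv₂
    have hw : w₁ ≠ w₂ := fun h => hne (by rw [h])
    have := hφ (G.mem_edgeSet.mp h₁) (G.mem_edgeSet.mp h₂) hw
    exact fun h => this (ULift.up_injective.eq_iff.mp h)
  · intro u c hc hnodup
    have hlen' : c.length ≤ r + 1 := by
      have h := hnodup.length_le_card
      simpa [SimpleGraph.Walk.length_edges] using h
    have hg : ((r : ℕ∞) + 2) ≤ (c.length : ℕ∞) :=
      (SimpleGraph.le_egirth.mp hgirth) u c hc
    have : (r + 2 : ℕ) ≤ c.length := by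
      rw [← Nat.cast_le (α := ℕ∞)]
      push_cast
      exact_mod_cast hg
    omega
end
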